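/- Fix an integer n ≥ 1 and reals α ≥ 1, β ≥ n, and let S_{α,β} = ∂T_{α,β} ⊂ ℝ^{n+1} be as in the construction below. Then there exist constants a, c > 0 such that for every integer k ≥ 1, the set S_{α,β} can be covered by at most (a·k + c)·2^{(n+1)kβ/(β+1)} sets of diameter at most 2^{−k}. -/

import Mathlib

open MeasureTheory Set
open scoped ENNReal

/-- The spacing `a_m = 2^{-m-⌊mβ⌋}` of the construction. -/
noncomputable def fractalSpacing (β : ℝ) (m : ℕ) : ℝ :=
  (2 : ℝ) ^ (-(m : ℝ) - (⌊(m : ℝ) * β⌋ : ℝ))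

/-- The right endpoints `y_{mj} = 2^{-m} + j·a_m`. -/
noncomputable def fractalPoint (β : ℝ) (m j : ℕ) : ℝ :=
  (2 : ℝ) ^ (-(m : ℝ)) + (j : ℝ) * fractalSpacing β m

/-- The rectangles `R_{mj} = [y_{mj} - C_m, y_{mj}] × [0, 2^{-m}]^n` with
`C_m = a_m^α / 2`. -/
noncomputable def fractalRect (n : ℕ) (α β : ℝ) (m j : ℕ) :
    Set (EuclideanSpace ℝ (Fin (n + 1))) :=
  {x | x 0 ∈ Icc (fractalPoint β m j - (fractalSpacing β m) ^ α / 2) (fractalPoint β m j) ∧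
       ∀ i : Fin (n + 1), i ≠ 0 → x i ∈ Icc (0 : ℝ) ((2 : ℝ) ^ (-(m : ℝ)))}

/-- The base cube `Q = [0,1]^n × [-1,0]` (last coordinate in `[-1,0]`). -/
def fractalBase (n : ℕ) : Set (EuclideanSpace ℝ (Fin (n + 1))) :=
  {x | (∀ i : Fin (n + 1), (i : ℕ) < n → x i ∈ Icc (0 : ℝ) 1) ∧
       x (Fin.last n) ∈ Icc (-1 : ℝ) 0}

/-- The fractal domain `T_{α,β} = Q ∪ ⋃_{m≥1} ⋃_{j=1}^{2^{⌊mβ⌋}} R_{mj}`. -/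
noncomputable def fractalDomain (n : ℕ) (α β : ℝ) :
    Set (EuclideanSpace ℝ (Fin (n + 1))) :=
  fractalBase n ∪
    ⋃ (m : ℕ) (_ : 1 ≤ m) (j : ℕ) (_ : 1 ≤ j) (_ : j ≤ 2 ^ (⌊(m : ℝ) * β⌋.toNat)),
      fractalRect n α β m j

/-- `Cov s ε N`: `s` can be covered by at most `N` sets of `EMetric.diam ≤ ε`. -/
def Cov {X : Type*} [PseudoEMetricSpace X] (s : Set X) (ε : ℝ≥0∞) (N : ℝ) : Prop :=
  ∃ F : Finset (Set X), s ⊆ ⋃₀ ↑F ∧ (∀ U ∈ F, EMetric.diam U ≤ ε) ∧ (F.card : ℝ) ≤ N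

namespace Cov
variable {X : Type*} [PseudoEMetricSpace X] {s t : Set X} {ε ε' : ℝ≥0∞} {N M : ℝ}

theorem mono_set (h : s ⊆ t) (hc : Cov t ε N) : Cov s ε N := by
  obtain ⟨F, h1, h2, h3⟩ := hc; exact ⟨F, h.trans h1, h2, h3⟩

theorem mono_num (h : N ≤ M) (hc : Cov s ε N) : Cov s ε M := by
  obtain ⟨F, h1, h2, h3⟩ := hc; exact ⟨F, h1, h2, h3.trans h⟩

theorem mono_eps (h : ε ≤ ε') (hc : Cov s ε N) : Cov s ε' N := by
  obtain ⟨F, h1, h2, h3⟩ := hc; exact ⟨F, h1, fun U hU => (h2 U hU).trans h, h3⟩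

theorem empty : Cov (∅ : Set X) ε 0 := ⟨∅, by simp, by simp, by simp⟩

theorem union (hs : Cov s ε N) (ht : Cov t ε M) : Cov (s ∪ t) ε (N + M) := by
  classical
  obtain ⟨F, h1, h2, h3⟩ := hs; obtain ⟨G, g1, g2, g3⟩ := ht
  refine ⟨F ∪ G, ?_, ?_, ?_⟩
  · intro x hx
    rcases hx with hx | hx
    · obtain ⟨U, hU, hxU⟩ := h1 hx; exact ⟨U, by simp only [Finset.coe_union, Set.mem_union]; exact Or.inl hU, hxU⟩
    · obtain ⟨U, hU, hxU⟩ := g1 hx; exact ⟨U, by simp only [Finset.coe_union, Set.mem_union]; exact Or.inr hU, hxU⟩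
  · intro U hU; rcases Finset.mem_union.1 hU with h | h
    · exact h2 U h
    · exact g2 U h
  · calc ((F ∪ G).card : ℝ) ≤ (F.card : ℝ) + G.card := by
          exact_mod_cast Nat.cast_le.2 (Finset.card_union_le F G)
    _ ≤ N + M := add_le_add h3 g3

theorem biUnion {ι : Type*} (I : Finset ι) (f : ι → Set X) (N : ι → ℝ)
    (h : ∀ i ∈ I, Cov (f i) ε (N i)) : Cov (⋃ i ∈ I, f i) ε (∑ i ∈ I, N i) := by
  classical
  induction I using Finset.induction_on with
  | empty => simpa using empty
  | insert a s hnotmem ih =>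
    rw [Finset.sum_insert hnotmem]
    have : (⋃ i ∈ insert a s, f i) = f a ∪ ⋃ i ∈ s, f i := by
      simp [Set.biUnion_insert]
    rw [this]
    exact (h a (Finset.mem_insert_self a s)).union
      (ih fun i hi => h i (Finset.mem_insert_of_mem hi))

end Cov

/-- A closed box in Euclidean space. -/
def Box (n : ℕ) (c b : Fin (n+1) → ℝ) : Set (EuclideanSpace ℝ (Fin (n+1))) :=
  {x | ∀ i, x i ∈ Icc (c i) (b i)}

theorem isClosed_box (n : ℕ) (c b : Fin (n+1) → ℝ) : IsClosed (Box n c b) := by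
  have : Box n c b =
      ⋂ i, (fun x : EuclideanSpace ℝ (Fin (n+1)) => x i) ⁻¹' Icc (c i) (b i) := by
    ext x; simp [Box, Set.mem_iInter]
  rw [this]
  exact isClosed_iInter fun i => isClosed_Icc.preimage (PiLp.continuous_apply 2 _ i)

theorem cov_box (n : ℕ) (c b : Fin (n+1) → ℝ) (hcb : ∀ i, c i ≤ b i) {δ : ℝ} (hδ : 0 < δ) :
    Cov (Box n c b) (ENNReal.ofReal (δ * (n+1))) (∏ i, ((b i - c i)/δ + 1)) := by
  classical
  set N : Fin (n+1) → ℕ := fun i => ⌊(b i - c i)/δ⌋₊ + 1 with hN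
  refine ⟨(Fintype.piFinset fun i => Finset.range (N i)).image
    (fun v => Box n (fun i => c i + v i * δ) (fun i => c i + v i * δ + δ)), ?_, ?_, ?_⟩
  · intro x hx
    set v : Fin (n+1) → ℕ := fun i => ⌊(x i - c i)/δ⌋₊ with hv
    have hx1 : ∀ i, c i ≤ x i := fun i => (hx i).1
    have hx2 : ∀ i, x i ≤ b i := fun i => (hx i).2
    refine ⟨Box n (fun i => c i + v i * δ) (fun i => c i + v i * δ + δ), ?_, ?_⟩
    · simp only [Finset.coe_image, Set.mem_image, Finset.mem_coe]
      refine ⟨v, ?_, rfl⟩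
      rw [Fintype.mem_piFinset]
      intro i
      rw [Finset.mem_range, hN]
      have hle : (x i - c i)/δ ≤ (b i - c i)/δ := by
        apply div_le_div_of_nonneg_right _ hδ.le
        · linarith [hx2 i]
      exact Nat.lt_succ_of_le (Nat.floor_le_floor hle)
    · intro i
      have h0 : 0 ≤ (x i - c i)/δ := div_nonneg (by linarith [hx1 i]) hδ.le
      have h1 : (v i : ℝ) ≤ (x i - c i)/δ := Nat.floor_le h0
      have h2 : (x i - c i)/δ < (v i : ℝ) + 1 := Nat.lt_floor_add_one _
      have h1' : (v i : ℝ) * δ ≤ x i - c i := (le_div_iff₀ hδ).1 h1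
      have h2' : x i - c i < ((v i : ℝ) + 1) * δ := (div_lt_iff₀ hδ).1 h2
      refine ⟨?_, ?_⟩
      · show c i + (v i : ℝ) * δ ≤ x i
        linarith
      · show x i ≤ c i + (v i : ℝ) * δ + δ
        nlinarith
  · intro U hU
    simp only [Finset.mem_image] at hU
    obtain ⟨w, _, rfl⟩ := hU
    refine EMetric.diam_le fun x hx y hy => ?_
    rw [edist_dist]
    refine ENNReal.ofReal_le_ofReal ?_
    have hd : ∀ i, dist (x i) (y i) ≤ δ := by
      intro i
      rw [Real.dist_eq, abs_sub_le_iff]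
      constructor <;> [skip; skip] <;>
        · have h1 := (hx i); have h2 := (hy i); simp only [Set.mem_Icc] at h1 h2; linarith
    calc dist x y = Real.sqrt (∑ i, dist (x i) (y i)^2) := EuclideanSpace.dist_eq x y
      _ ≤ Real.sqrt (∑ _i : Fin (n+1), δ^2) := by
          apply Real.sqrt_le_sqrt
          apply Finset.sum_le_sum
          intro i _
          exact pow_le_pow_left₀ dist_nonneg (hd i) 2
      _ ≤ Real.sqrt ((δ * (n+1))^2) := by
          apply Real.sqrt_le_sqrt
          rw [Finset.sum_const, Finset.card_univ, Fintype.card_fin, nsmul_eq_mul]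
          rw [mul_pow]
          push_cast
          have h1 : (0:ℝ) ≤ δ^2 * ((n:ℝ)+1) * (n:ℝ) := by positivity
          nlinarith [h1]
      _ = δ * (n+1) := Real.sqrt_sq (by positivity)
  · calc (((Fintype.piFinset fun i => Finset.range (N i)).image _).card : ℝ)
        ≤ ((Fintype.piFinset fun i => Finset.range (N i)).card : ℝ) := by
          exact_mod_cast Finset.card_image_le
    _ = ∏ i, (N i : ℝ) := by
        rw [Fintype.card_piFinset]
        simp
    _ ≤ ∏ i, ((b i - c i)/δ + 1) := by
        apply Finset.prod_le_prod
        · intro i _; positivity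
        · intro i _
          rw [hN]
          push_cast
          have : ((⌊(b i - c i)/δ⌋₊ : ℝ)) ≤ (b i - c i)/δ :=
            Nat.floor_le (div_nonneg (by linarith [hcb i]) hδ.le)
          linarith

/-- The union of the 2(n+1) faces of a box. -/
def Faces (n : ℕ) (c b : Fin (n+1) → ℝ) : Set (EuclideanSpace ℝ (Fin (n+1))) :=
  ⋃ i₀ : Fin (n+1),
    (Box n c (Function.update b i₀ (c i₀)) ∪ Box n (Function.update c i₀ (b i₀)) b)

theorem isOpen_obox (n : ℕ) (c b : Fin (n+1) → ℝ) :
    IsOpen {x : EuclideanSpace ℝ (Fin (n+1)) | ∀ i, x i ∈ Ioo (c i) (b i)} := by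
  have : {x : EuclideanSpace ℝ (Fin (n+1)) | ∀ i, x i ∈ Ioo (c i) (b i)} =
      ⋂ i, (fun x : EuclideanSpace ℝ (Fin (n+1)) => x i) ⁻¹' Ioo (c i) (b i) := by
    ext x; simp [Set.mem_iInter]
  rw [this]
  exact isOpen_iInter_of_finite fun i => isOpen_Ioo.preimage (PiLp.continuous_apply 2 _ i)

/-- Points of a box that are not in the interior of a superset `T` lie on the faces. -/
theorem mem_faces_of_not_interior (n : ℕ) (c b : Fin (n+1) → ℝ)
    (T : Set (EuclideanSpace ℝ (Fin (n+1)))) (hBT : Box n c b ⊆ T)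
    (x : EuclideanSpace ℝ (Fin (n+1))) (hx : x ∈ Box n c b) (hxi : x ∉ interior T) :
    x ∈ Faces n c b := by
  by_cases hs : ∀ i, c i < x i ∧ x i < b i
  · exfalso
    apply hxi
    have hsub : {y : EuclideanSpace ℝ (Fin (n+1)) | ∀ i, y i ∈ Ioo (c i) (b i)} ⊆ T := by
      intro y hy
      exact hBT fun i => ⟨(hy i).1.le, (hy i).2.le⟩
    exact interior_maximal hsub (isOpen_obox n c b) hs
  · push_neg at hs
    obtain ⟨i₀, hi₀⟩ := hs
    rcases le_or_gt (x i₀) (c i₀) with hle | hlt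
    · have heq : x i₀ = c i₀ := le_antisymm hle (hx i₀).1
      refine Set.mem_iUnion.2 ⟨i₀, Or.inl fun i => ?_⟩
      rcases eq_or_ne i i₀ with rfl | hne
      · rw [Function.update_self]
        exact ⟨(hx i).1, heq.le⟩
      · rw [Function.update_of_ne hne]
        exact hx i
    · have heq : x i₀ = b i₀ := le_antisymm (hx i₀).2 (hi₀ hlt)
      refine Set.mem_iUnion.2 ⟨i₀, Or.inr fun i => ?_⟩
      rcases eq_or_ne i i₀ with rfl | hne
      · rw [Function.update_self]
        exact ⟨heq.ge, (hx i).2⟩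
      · rw [Function.update_of_ne hne]
        exact hx i

theorem prod_face_bound (n : ℕ) (g : Fin (n+1) → ℝ) (i₀ : Fin (n+1)) (M : ℝ)
    (h₀ : g i₀ = 1) (hg : ∀ i, 0 ≤ g i) (hM : ∀ i, g i ≤ M) : ∏ i, g i ≤ M ^ n := by
  have hM0 : 0 ≤ M := (hg i₀).trans (hM i₀)
  rw [← Finset.mul_prod_erase Finset.univ g (Finset.mem_univ i₀), h₀, one_mul]
  calc ∏ i ∈ Finset.univ.erase i₀, g i ≤ ∏ _i ∈ Finset.univ.erase i₀, M :=
        Finset.prod_le_prod (fun i _ => hg i) (fun i _ => hM i)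
  _ = M ^ n := by
      rw [Finset.prod_const, Finset.card_erase_of_mem (Finset.mem_univ i₀),
        Finset.card_univ, Fintype.card_fin]
      simp

/-- Covering the faces of a box all of whose sides are at most `L`. -/
theorem cov_faces (n : ℕ) (c b : Fin (n+1) → ℝ) (hcb : ∀ i, c i ≤ b i)
    {L δ : ℝ} (hL : ∀ i, b i - c i ≤ L) (hδ : 0 < δ) :
    Cov (Faces n c b) (ENNReal.ofReal (δ * (n+1))) (2 * (n+1) * (L/δ + 1)^n) := by
  have hL0 : 0 ≤ L := le_trans (by linarith [hcb 0, hL 0] : (0:ℝ) ≤ L) le_rfl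
  have key : ∀ i₀ : Fin (n+1),
      Cov (Box n c (Function.update b i₀ (c i₀)) ∪ Box n (Function.update c i₀ (b i₀)) b)
        (ENNReal.ofReal (δ * (n+1))) ((L/δ + 1)^n + (L/δ + 1)^n) := by
    intro i₀
    refine Cov.union ?_ ?_
    · refine (cov_box n c (Function.update b i₀ (c i₀)) ?_ hδ).mono_num ?_
      · intro i
        rcases eq_or_ne i i₀ with rfl | hne
        · rw [Function.update_self]
        · rw [Function.update_of_ne hne]; exact hcb i
      · refine prod_face_bound n _ i₀ _ ?_ ?_ ?_
        · rw [Function.update_self]; simp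
        · intro i
          rcases eq_or_ne i i₀ with rfl | hne
          · rw [Function.update_self]; simp
          · rw [Function.update_of_ne hne]
            have h1 : 0 ≤ (b i - c i)/δ := div_nonneg (by linarith [hcb i]) hδ.le
            linarith
        · intro i
          rcases eq_or_ne i i₀ with rfl | hne
          · rw [Function.update_self]
            have : (0:ℝ) ≤ L/δ := by positivity
            simp; linarith
          · rw [Function.update_of_ne hne]
            have : (b i - c i)/δ ≤ L/δ := by
              apply div_le_div_of_nonneg_right (hL i) hδ.le
            linarith
    · refine (cov_box n (Function.update c i₀ (b i₀)) b ?_ hδ).mono_num ?_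
      · intro i
        rcases eq_or_ne i i₀ with rfl | hne
        · rw [Function.update_self]
        · rw [Function.update_of_ne hne]; exact hcb i
      · refine prod_face_bound n _ i₀ _ ?_ ?_ ?_
        · rw [Function.update_self]; simp
        · intro i
          rcases eq_or_ne i i₀ with rfl | hne
          · rw [Function.update_self]; simp
          · rw [Function.update_of_ne hne]
            have h1 : 0 ≤ (b i - c i)/δ := div_nonneg (by linarith [hcb i]) hδ.le
            linarith
        · intro i
          rcases eq_or_ne i i₀ with rfl | hne
          · rw [Function.update_self]
            have : (0:ℝ) ≤ L/δ := by positivity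
            simp; linarith
          · rw [Function.update_of_ne hne]
            have : (b i - c i)/δ ≤ L/δ := by
              apply div_le_div_of_nonneg_right (hL i) hδ.le
            linarith
  have := Cov.biUnion Finset.univ
    (fun i₀ : Fin (n+1) =>
      Box n c (Function.update b i₀ (c i₀)) ∪ Box n (Function.update c i₀ (b i₀)) b)
    (fun _ => (L/δ + 1)^n + (L/δ + 1)^n) (fun i _ => key i)
  have heq : Faces n c b = ⋃ i₀ ∈ Finset.univ, (Box n c (Function.update b i₀ (c i₀)) ∪
      Box n (Function.update c i₀ (b i₀)) b) := by
    simp [Faces]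
  rw [heq]
  refine this.mono_num ?_
  rw [Finset.sum_const, Finset.card_univ, Fintype.card_fin, nsmul_eq_mul]
  push_cast
  ring_nf
  nlinarith [pow_nonneg (by positivity : (0:ℝ) ≤ L/δ + 1) n]

-- box descriptions
def cQf (n : ℕ) : Fin (n+1) → ℝ := fun i => if (i:ℕ) < n then 0 else -1
def bQf (n : ℕ) : Fin (n+1) → ℝ := fun i => if (i:ℕ) < n then 1 else 0
noncomputable def cRf (n : ℕ) (α β : ℝ) (m j : ℕ) : Fin (n+1) → ℝ :=
  fun i => if i = 0 then fractalPoint β m j - (fractalSpacing β m) ^ α / 2 else 0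
noncomputable def bRf (n : ℕ) (β : ℝ) (m j : ℕ) : Fin (n+1) → ℝ :=
  fun i => if i = 0 then fractalPoint β m j else (2:ℝ) ^ (-(m : ℝ))

theorem base_eq_box (n : ℕ) : fractalBase n = Box n (cQf n) (bQf n) := by
  ext x
  constructor
  · rintro ⟨h1, h2⟩ i
    by_cases hi : (i:ℕ) < n
    · simpa [cQf, bQf, hi] using h1 i hi
    · have hlast : i = Fin.last n := by
        apply Fin.ext
        rw [Fin.val_last]
        have := i.isLt
        omega
      subst hlast
      simpa [cQf, bQf, hi] using h2
  · intro h
    refine ⟨fun i hi => ?_, ?_⟩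
    · simpa [cQf, bQf, hi] using h i
    · have := h (Fin.last n)
      simpa [cQf, bQf, Fin.val_last] using this

theorem rect_eq_box (n : ℕ) (α β : ℝ) (m j : ℕ) :
    fractalRect n α β m j = Box n (cRf n α β m j) (bRf n β m j) := by
  ext x
  constructor
  · rintro ⟨h1, h2⟩ i
    rcases eq_or_ne i 0 with rfl | hne
    · simpa [cRf, bRf] using h1
    · simpa [cRf, bRf, hne] using h2 i hne
  · intro h
    refine ⟨?_, fun i hi => ?_⟩
    · simpa [cRf, bRf] using h 0
    · simpa [cRf, bRf, hi] using h i

theorem spacing_pos (β : ℝ) (m : ℕ) : 0 < fractalSpacing β m :=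
  Real.rpow_pos_of_pos two_pos _

theorem floor_cast (β : ℝ) (hβ : 0 ≤ β) (m : ℕ) :
    ((⌊(m:ℝ)*β⌋.toNat : ℕ) : ℝ) = ((⌊(m:ℝ)*β⌋ : ℤ) : ℝ) := by
  have h : (0:ℝ) ≤ (m:ℝ)*β := by positivity
  exact_mod_cast Int.toNat_of_nonneg (Int.floor_nonneg.2 h)

theorem floor_nn (β : ℝ) (hβ : 0 ≤ β) (m : ℕ) : (0:ℝ) ≤ ((⌊(m:ℝ)*β⌋ : ℤ) : ℝ) := by
  rw [← floor_cast β hβ m]; positivity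

theorem spacing_le (β : ℝ) (hβ : 0 ≤ β) (m : ℕ) :
    fractalSpacing β m ≤ (2:ℝ) ^ (-(m:ℝ)) := by
  apply Real.rpow_le_rpow_of_exponent_le one_le_two
  have := floor_nn β hβ m
  linarith

theorem spacing_le_one (β : ℝ) (hβ : 0 ≤ β) (m : ℕ) : fractalSpacing β m ≤ 1 := by
  refine (spacing_le β hβ m).trans ?_
  calc (2:ℝ) ^ (-(m:ℝ)) ≤ (2:ℝ) ^ (0:ℝ) := by
        apply Real.rpow_le_rpow_of_exponent_le one_le_two
        simp
  _ = 1 := Real.rpow_zero 2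

theorem width_le (α β : ℝ) (hα : 1 ≤ α) (hβ : 0 ≤ β) (m : ℕ) :
    (fractalSpacing β m) ^ α / 2 ≤ fractalSpacing β m := by
  have h1 : (fractalSpacing β m) ^ α ≤ (fractalSpacing β m) ^ (1:ℝ) :=
    Real.rpow_le_rpow_of_exponent_ge (spacing_pos β m) (spacing_le_one β hβ m) hα
  rw [Real.rpow_one] at h1
  have := (spacing_pos β m).le
  linarith

theorem width_nonneg (α β : ℝ) (m : ℕ) : 0 ≤ (fractalSpacing β m) ^ α / 2 := by
  have := Real.rpow_nonneg (spacing_pos β m).le α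
  linarith

theorem Jm_mul_spacing (β : ℝ) (hβ : 0 ≤ β) (m : ℕ) :
    (((2 ^ (⌊(m : ℝ) * β⌋.toNat) : ℕ)) : ℝ) * fractalSpacing β m = (2:ℝ) ^ (-(m:ℝ)) := by
  have h1 : (((2 ^ (⌊(m : ℝ) * β⌋.toNat) : ℕ)) : ℝ)
      = (2:ℝ) ^ ((⌊(m : ℝ) * β⌋.toNat : ℕ) : ℝ) := by
    push_cast
    rw [Real.rpow_natCast]
  rw [h1, floor_cast β hβ m, fractalSpacing, ← Real.rpow_add two_pos]
  congr 1
  ring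

theorem point_le (β : ℝ) (hβ : 0 ≤ β) (m j : ℕ) (hj : j ≤ 2 ^ (⌊(m : ℝ) * β⌋.toNat)) :
    fractalPoint β m j ≤ 2 * (2:ℝ) ^ (-(m:ℝ)) := by
  have h1 : (j : ℝ) * fractalSpacing β m
      ≤ (((2 ^ (⌊(m : ℝ) * β⌋.toNat) : ℕ)) : ℝ) * fractalSpacing β m :=
    mul_le_mul_of_nonneg_right (by exact_mod_cast hj) (spacing_pos β m).le
  rw [Jm_mul_spacing β hβ m] at h1
  rw [fractalPoint]
  linarith

theorem point_lb (β : ℝ) (m j : ℕ) (hj : 1 ≤ j) :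
    (2:ℝ) ^ (-(m:ℝ)) + fractalSpacing β m ≤ fractalPoint β m j := by
  have h1 : (1:ℝ) * fractalSpacing β m ≤ (j : ℝ) * fractalSpacing β m :=
    mul_le_mul_of_nonneg_right (by exact_mod_cast hj) (spacing_pos β m).le
  rw [one_mul] at h1
  rw [fractalPoint]
  linarith


set_option maxHeartbeats 1000000 in
/-- there are constants `a, c > 0` such that for every `k ≥ 1`
the hypersurface `S_{α,β} = ∂T_{α,β}` can be covered by at most
`(a·k + c)·2^{(n+1)kβ/(β+1)}` sets of diameter at most `2^{-k}`. -/
theorem fractal_boundary_covering_upper_bound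
    (n : ℕ) (hn : 1 ≤ n) (α β : ℝ) (hα : 1 ≤ α) (hβ : (n : ℝ) ≤ β) :
    ∃ a c : ℝ, 0 < a ∧ 0 < c ∧
      ∀ k : ℕ, 1 ≤ k →
        ∃ F : Finset (Set (EuclideanSpace ℝ (Fin (n + 1)))),
          frontier (fractalDomain n α β) ⊆
            ⋃₀ (F : Set (Set (EuclideanSpace ℝ (Fin (n + 1))))) ∧
          (∀ U ∈ F, EMetric.diam U ≤ ENNReal.ofReal ((2 : ℝ) ^ (-(k : ℝ)))) ∧
          (F.card : ℝ) ≤ (a * (k : ℝ) + c) *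
            (2 : ℝ) ^ (((n : ℝ) + 1) * (k : ℝ) * β / (β + 1)) := by
  have hn1 : (1:ℝ) ≤ (n:ℝ) := by exact_mod_cast hn
  have hβ0 : (0:ℝ) ≤ β := by linarith
  have hβ1 : (0:ℝ) < β + 1 := by linarith
  have hβn : (0:ℝ) ≤ β - (n:ℝ) := by linarith
  refine ⟨2*((n:ℝ)+1)*((n:ℝ)+2)^n * (2:ℝ)^(β-(n:ℝ)),
    2*((n:ℝ)+1)*((n:ℝ)+2)^n + (2*(n:ℝ)+3)^(n+1), ?_, ?_, ?_⟩
  · have := Real.rpow_pos_of_pos two_pos (β-(n:ℝ))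
    positivity
  · positivity
  intro k hk
  set K : ℝ := (k:ℝ) with hK
  have hK0 : 0 ≤ K := by positivity
  have hK1 : 1 ≤ K := by rw [hK]; exact_mod_cast hk
  set δ : ℝ := (2:ℝ)^(-K) / ((n:ℝ)+1) with hδdef
  have hδ : 0 < δ := by
    have := Real.rpow_pos_of_pos two_pos (-K)
    positivity
  set m₀ : ℕ := ⌈K/(β+1)⌉₊ + 1 with hm₀def
  set J : ℕ → ℕ := fun m => 2 ^ (⌊(m : ℝ) * β⌋.toNat) with hJdef
  set P : ℝ := ((n : ℝ) + 1) * K * β / (β + 1) with hPdef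
  have hεeq : ENNReal.ofReal (δ * ((n:ℝ)+1)) = ENNReal.ofReal ((2:ℝ)^(-K)) := by
    congr 1
    rw [hδdef]
    field_simp
  -- the ambient closed superset
  set RRbox : Set (EuclideanSpace ℝ (Fin (n+1))) :=
    ⋃ m ∈ Finset.Ico 1 m₀, ⋃ j ∈ Finset.Icc 1 (J m), Box n (cRf n α β m j) (bRf n β m j)
    with hRRbox
  set cBf : Fin (n+1) → ℝ := fun _ => 0 with hcBf
  set bBf : Fin (n+1) → ℝ :=
    fun i => if i = 0 then 2*(2:ℝ)^(-(m₀:ℝ)) else (2:ℝ)^(-(m₀:ℝ)) with hbBf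
  have hTsub : fractalDomain n α β ⊆ Box n (cQf n) (bQf n) ∪ (Box n cBf bBf ∪ RRbox) := by
    intro x hx
    rcases hx with hx | hx
    · exact Or.inl ((base_eq_box n) ▸ hx)
    · simp only [Set.mem_iUnion] at hx
      obtain ⟨m, hm1, j, hj1, hj2, hxR⟩ := hx
      rw [rect_eq_box] at hxR
      by_cases hmm : m < m₀
      · refine Or.inr (Or.inr ?_)
        refine Set.mem_iUnion₂.2 ⟨m, Finset.mem_Ico.2 ⟨hm1, hmm⟩, ?_⟩
        exact Set.mem_iUnion₂.2 ⟨j, Finset.mem_Icc.2 ⟨hj1, hj2⟩, hxR⟩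
      · push_neg at hmm
        refine Or.inr (Or.inl ?_)
        have hmono : (2:ℝ)^(-(m:ℝ)) ≤ (2:ℝ)^(-(m₀:ℝ)) := by
          apply Real.rpow_le_rpow_of_exponent_le one_le_two
          have : (m₀:ℝ) ≤ (m:ℝ) := by exact_mod_cast hmm
          linarith
        intro i
        rcases eq_or_ne i 0 with rfl | hne
        · have h0 := hxR 0
          simp only [cRf, bRf, eq_self_iff_true, if_true] at h0
          have hC := width_le α β hα hβ0 m
          have hlb := point_lb β m j hj1
          have hub := point_le β hβ0 m j hj2
          have hsp := (spacing_pos β m).le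
          have h2m : (0:ℝ) < (2:ℝ)^(-(m:ℝ)) := Real.rpow_pos_of_pos two_pos _
          constructor
          · show cBf 0 ≤ x 0
            simp only [hcBf]
            linarith [h0.1]
          · show x 0 ≤ bBf 0
            simp only [hbBf, if_pos rfl]
            linarith [h0.2]
        · have h0 := hxR i
          simp only [cRf, bRf, if_neg hne] at h0
          constructor
          · show cBf i ≤ x i
            simp only [hcBf]
            exact h0.1
          · show x i ≤ bBf i
            simp only [hbBf, if_neg hne]
            linarith [h0.2]
  have hEclosed : IsClosed (Box n (cQf n) (bQf n) ∪ (Box n cBf bBf ∪ RRbox)) := by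
    refine (isClosed_box n _ _).union ((isClosed_box n _ _).union ?_)
    refine Set.Finite.isClosed_biUnion (Finset.Ico 1 m₀).finite_toSet (fun m _ => ?_)
    exact Set.Finite.isClosed_biUnion (Finset.Icc 1 (J m)).finite_toSet
      (fun j _ => isClosed_box n _ _)
  have hfrontG : frontier (fractalDomain n α β) ⊆
      Faces n (cQf n) (bQf n) ∪ (Box n cBf bBf ∪
        ⋃ m ∈ Finset.Ico 1 m₀, ⋃ j ∈ Finset.Icc 1 (J m),
          Faces n (cRf n α β m j) (bRf n β m j)) := by
    intro x hx
    have hxi : x ∉ interior (fractalDomain n α β) := hx.2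
    have hxE := (closure_minimal hTsub hEclosed) (frontier_subset_closure hx)
    rcases hxE with hxQ | hxB | hxR
    · refine Or.inl (mem_faces_of_not_interior n _ _ _ ?_ x hxQ hxi)
      rw [← base_eq_box n]
      exact Set.subset_union_left
    · exact Or.inr (Or.inl hxB)
    · simp only [hRRbox, Set.mem_iUnion, exists_prop] at hxR
      obtain ⟨m, hm, j, hj, hxRb⟩ := hxR
      refine Or.inr (Or.inr (Set.mem_iUnion₂.2 ⟨m, hm, Set.mem_iUnion₂.2 ⟨j, hj, ?_⟩⟩))
      refine mem_faces_of_not_interior n _ _ _ ?_ x hxRb hxi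
      rw [← rect_eq_box]
      intro y hy
      refine Or.inr (Set.mem_iUnion.2 ⟨m, Set.mem_iUnion.2 ⟨(Finset.mem_Ico.1 hm).1,
        Set.mem_iUnion.2 ⟨j, Set.mem_iUnion.2 ⟨(Finset.mem_Icc.1 hj).1,
          Set.mem_iUnion.2 ⟨(Finset.mem_Icc.1 hj).2, hy⟩⟩⟩⟩⟩)
  -- coverings
  have covQ : Cov (Faces n (cQf n) (bQf n)) (ENNReal.ofReal ((2:ℝ)^(-K)))
      (2 * ((n:ℝ)+1) * ((1:ℝ)/δ + 1)^n) := by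
    refine (cov_faces n _ _ ?_ (L := 1) ?_ hδ).mono_eps (le_of_eq hεeq)
    · intro i; by_cases hi : (i:ℕ) < n <;> simp [cQf, bQf, hi]
    · intro i; by_cases hi : (i:ℕ) < n <;> simp [cQf, bQf, hi] <;> norm_num
  have covB : Cov (Box n cBf bBf) (ENNReal.ofReal ((2:ℝ)^(-K)))
      (∏ i, ((bBf i - cBf i)/δ + 1)) := by
    refine (cov_box n _ _ ?_ hδ).mono_eps (le_of_eq hεeq)
    intro i
    simp only [hcBf, hbBf]
    have := (Real.rpow_pos_of_pos two_pos (-(m₀:ℝ))).le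
    split <;> linarith
  have covRR : Cov (⋃ m ∈ Finset.Ico 1 m₀, ⋃ j ∈ Finset.Icc 1 (J m),
      Faces n (cRf n α β m j) (bRf n β m j)) (ENNReal.ofReal ((2:ℝ)^(-K)))
      (∑ m ∈ Finset.Ico 1 m₀, ∑ j ∈ Finset.Icc 1 (J m),
        (2 * ((n:ℝ)+1) * ((2:ℝ)^(-(m:ℝ))/δ + 1)^n)) := by
    refine Cov.biUnion _ _ _ (fun m _ => Cov.biUnion _ _ _ (fun j _ => ?_))
    refine (cov_faces n _ _ ?_ (L := (2:ℝ)^(-(m:ℝ))) ?_ hδ).mono_eps (le_of_eq hεeq)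
    · intro i
      rcases eq_or_ne i 0 with rfl | hne
      · simp only [cRf, bRf, eq_self_iff_true, if_true]
        linarith [width_nonneg α β m]
      · simp only [cRf, bRf, if_neg hne]
        exact (Real.rpow_pos_of_pos two_pos _).le
    · intro i
      rcases eq_or_ne i 0 with rfl | hne
      · simp only [cRf, bRf, eq_self_iff_true, if_true]
        have h1 := width_le α β hα hβ0 m
        have h2 := spacing_le β hβ0 m
        linarith
      · simp only [cRf, bRf, if_neg hne]
        linarith
  have covAll := (covQ.union (covB.union covRR)).mono_set hfrontG
  refine ?_
  have harith : (2 * ((n:ℝ)+1) * ((1:ℝ)/δ + 1)^n) +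
      ((∏ i, ((bBf i - cBf i)/δ + 1)) +
       (∑ m ∈ Finset.Ico 1 m₀, ∑ j ∈ Finset.Icc 1 (J m),
        (2 * ((n:ℝ)+1) * ((2:ℝ)^(-(m:ℝ))/δ + 1)^n))) ≤
      ((2*((n:ℝ)+1)*((n:ℝ)+2)^n * (2:ℝ)^(β-(n:ℝ))) * K +
        (2*((n:ℝ)+1)*((n:ℝ)+2)^n + (2*(n:ℝ)+3)^(n+1))) * (2:ℝ)^P := by
    have hmono2 : ∀ s t : ℝ, s ≤ t → (2:ℝ)^s ≤ (2:ℝ)^t :=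
      fun s t h => Real.rpow_le_rpow_of_exponent_le one_le_two h
    have h2pos : ∀ t : ℝ, (0:ℝ) < (2:ℝ)^t := fun t => Real.rpow_pos_of_pos two_pos t
    have hone : ∀ t : ℝ, 0 ≤ t → (1:ℝ) ≤ (2:ℝ)^t := fun t ht => by
      simpa [Real.rpow_zero] using hmono2 0 t ht
    have hradd : ∀ s t : ℝ, (2:ℝ)^(s+t) = (2:ℝ)^s * (2:ℝ)^t :=
      fun s t => Real.rpow_add two_pos s t
    have h2K : (1:ℝ) ≤ (2:ℝ)^K := hone K hK0
    have hP0 : 0 ≤ P := by rw [hPdef]; positivity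
    have hδinv : 1/δ = ((n:ℝ)+1) * (2:ℝ)^K := by
      rw [hδdef, one_div_div, Real.rpow_neg (by norm_num : (0:ℝ) ≤ 2), div_eq_mul_inv, inv_inv]
    set X : ℝ := (2:ℝ)^(K*β/(β+1)) with hXdef
    have hX1 : (1:ℝ) ≤ X := hone _ (by positivity)
    have hXpos : (0:ℝ) < X := h2pos _
    have hXP : X^(n+1) = (2:ℝ)^P := by
      rw [hXdef, ← Real.rpow_natCast ((2:ℝ)^(K*β/(β+1))) (n+1),
        ← Real.rpow_mul (by norm_num : (0:ℝ) ≤ 2)]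
      rw [hPdef]
      congr 1
      push_cast
      ring
    -- Part 1 : base cube faces
    have hQ1 : (1:ℝ)/δ + 1 ≤ ((n:ℝ)+2)*(2:ℝ)^K := by
      rw [hδinv]; nlinarith [h2K]
    have hQ2 : ((1:ℝ)/δ + 1)^n ≤ (((n:ℝ)+2)*(2:ℝ)^K)^n := by
      apply pow_le_pow_left₀ (by positivity) hQ1
    have hQ3 : (((n:ℝ)+2)*(2:ℝ)^K)^n = ((n:ℝ)+2)^n * (2:ℝ)^(K*(n:ℝ)) := by
      rw [mul_pow]
      congr 1
      rw [← Real.rpow_natCast ((2:ℝ)^K) n, ← Real.rpow_mul (by norm_num : (0:ℝ) ≤ 2)]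
    have hQ4 : (2:ℝ)^(K*(n:ℝ)) ≤ (2:ℝ)^P := by
      apply hmono2
      rw [hPdef, le_div_iff₀ hβ1]
      have hKn : K*(n:ℝ) ≤ K*β := mul_le_mul_of_nonneg_left hβ hK0
      nlinarith [hKn, hK0, hn1]
    have hNQ : 2 * ((n:ℝ)+1) * ((1:ℝ)/δ + 1)^n
        ≤ 2*((n:ℝ)+1)*((n:ℝ)+2)^n * (2:ℝ)^P := by
      calc 2 * ((n:ℝ)+1) * ((1:ℝ)/δ + 1)^n
          ≤ 2 * ((n:ℝ)+1) * (((n:ℝ)+2)^n * (2:ℝ)^(K*(n:ℝ))) :=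
            mul_le_mul_of_nonneg_left (hQ2.trans (le_of_eq hQ3)) (by positivity)
      _ ≤ 2 * ((n:ℝ)+1) * (((n:ℝ)+2)^n * (2:ℝ)^P) := by
            apply mul_le_mul_of_nonneg_left _ (by positivity)
            exact mul_le_mul_of_nonneg_left hQ4 (by positivity)
      _ = 2*((n:ℝ)+1)*((n:ℝ)+2)^n * (2:ℝ)^P := by ring
    -- Part 2 : the small block
    have hm0low : K/(β+1) ≤ (m₀:ℝ) := by
      rw [hm₀def]; push_cast; linarith [Nat.le_ceil (K/(β+1))]
    have hKm0eq : K - K/(β+1) = K*β/(β+1) := by field_simp; ring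
    have hBexp : K - (m₀:ℝ) ≤ K*β/(β+1) := by linarith
    have h2Km : (2:ℝ)^(K-(m₀:ℝ)) = (2:ℝ)^K * (2:ℝ)^(-(m₀:ℝ)) := by
      rw [sub_eq_add_neg, hradd]
    have hXb : (2:ℝ)^(K - (m₀:ℝ)) ≤ X := hmono2 _ _ hBexp
    have hfac : ∀ i : Fin (n+1), (bBf i - cBf i)/δ + 1 ≤ (2*(n:ℝ)+3) * X := by
      intro i
      simp only [hbBf, hcBf]
      split
      · calc (2*(2:ℝ)^(-(m₀:ℝ)) - 0)/δ + 1
            = 2*((n:ℝ)+1)*((2:ℝ)^K*(2:ℝ)^(-(m₀:ℝ))) + 1 := by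
              rw [sub_zero, div_eq_mul_one_div, hδinv]; ring
        _ = 2*((n:ℝ)+1)*(2:ℝ)^(K-(m₀:ℝ)) + 1 := by rw [h2Km]
        _ ≤ 2*((n:ℝ)+1)*X + 1 := by
              have := mul_le_mul_of_nonneg_left hXb (by positivity : (0:ℝ) ≤ 2*((n:ℝ)+1))
              linarith
        _ ≤ (2*(n:ℝ)+3)*X := by nlinarith [hX1, hXpos]
      · calc ((2:ℝ)^(-(m₀:ℝ)) - 0)/δ + 1
            = ((n:ℝ)+1)*((2:ℝ)^K*(2:ℝ)^(-(m₀:ℝ))) + 1 := by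
              rw [sub_zero, div_eq_mul_one_div, hδinv]; ring
        _ = ((n:ℝ)+1)*(2:ℝ)^(K-(m₀:ℝ)) + 1 := by rw [h2Km]
        _ ≤ ((n:ℝ)+1)*X + 1 := by
              have := mul_le_mul_of_nonneg_left hXb (by positivity : (0:ℝ) ≤ ((n:ℝ)+1))
              linarith
        _ ≤ (2*(n:ℝ)+3)*X := by nlinarith [hX1, hXpos, hn1]
    have hNB : (∏ i, ((bBf i - cBf i)/δ + 1)) ≤ (2*(n:ℝ)+3)^(n+1) * (2:ℝ)^P := by
      calc (∏ i, ((bBf i - cBf i)/δ + 1)) ≤ ∏ _i : Fin (n+1), (2*(n:ℝ)+3) * X := by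
            apply Finset.prod_le_prod _ (fun i _ => hfac i)
            intro i _
            have hb0 : 0 ≤ bBf i - cBf i := by
              simp only [hbBf, hcBf]
              split
              · linarith [(h2pos (-(m₀:ℝ))).le]
              · linarith [(h2pos (-(m₀:ℝ))).le]
            have := div_nonneg hb0 hδ.le
            linarith
      _ = ((2*(n:ℝ)+3) * X)^(n+1) := by
            rw [Finset.prod_const, Finset.card_univ, Fintype.card_fin]
      _ = (2*(n:ℝ)+3)^(n+1) * X^(n+1) := mul_pow _ _ _
      _ = (2*(n:ℝ)+3)^(n+1) * (2:ℝ)^P := by rw [hXP]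
    -- Part 3 : the teeth
    have hceilk : (⌈K/(β+1)⌉₊ : ℕ) ≤ k := by
      rw [Nat.ceil_le]
      rw [hK]
      exact div_le_self (by positivity) (by linarith)
    have hm0up : ((m₀:ℝ)) ≤ K/(β+1) + 2 := by
      rw [hm₀def]; push_cast
      have := Nat.ceil_lt_add_one (show (0:ℝ) ≤ K/(β+1) by positivity)
      linarith
    have hPeq : P = K*(n:ℝ) + K*(β-(n:ℝ))/(β+1) := by
      rw [hPdef]; field_simp; ring
    have hterm : ∀ m ∈ Finset.Ico 1 m₀,
        (∑ _j ∈ Finset.Icc 1 (J m), (2 * ((n:ℝ)+1) * ((2:ℝ)^(-(m:ℝ))/δ + 1)^n))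
        ≤ 2*((n:ℝ)+1)*((n:ℝ)+2)^n * (2:ℝ)^(β-(n:ℝ)) * (2:ℝ)^P := by
      intro m hm
      obtain ⟨hm1, hm2⟩ := Finset.mem_Ico.1 hm
      have hmceil : m ≤ ⌈K/(β+1)⌉₊ := by omega
      have hmk : (m:ℝ) ≤ K := by
        rw [hK]
        exact_mod_cast hmceil.trans hceilk
      have hmup : (m:ℝ) ≤ K/(β+1) + 1 := by
        have h1 : (m:ℝ) ≤ (⌈K/(β+1)⌉₊ : ℝ) := by exact_mod_cast hmceil
        have h2 := Nat.ceil_lt_add_one (show (0:ℝ) ≤ K/(β+1) by positivity)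
        linarith
      have hsum : (∑ _j ∈ Finset.Icc 1 (J m), (2 * ((n:ℝ)+1) * ((2:ℝ)^(-(m:ℝ))/δ + 1)^n))
          = (J m : ℝ) * (2 * ((n:ℝ)+1) * ((2:ℝ)^(-(m:ℝ))/δ + 1)^n) := by
        rw [Finset.sum_const, Nat.card_Icc, nsmul_eq_mul]
        simp
      rw [hsum]
      have hJle : ((J m : ℕ):ℝ) ≤ (2:ℝ)^((m:ℝ)*β) := by
        have h1 : ((J m : ℕ):ℝ) = (2:ℝ)^((⌊(m:ℝ)*β⌋.toNat : ℕ) : ℝ) := by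
          rw [hJdef]
          push_cast
          rw [Real.rpow_natCast]
        rw [h1, floor_cast β hβ0 m]
        exact hmono2 _ _ (Int.floor_le _)
      have hfacm : (2:ℝ)^(-(m:ℝ))/δ + 1 ≤ ((n:ℝ)+2)*(2:ℝ)^(K-(m:ℝ)) := by
        have he : (2:ℝ)^(-(m:ℝ))/δ = ((n:ℝ)+1)*(2:ℝ)^(K-(m:ℝ)) := by
          rw [div_eq_mul_one_div, hδinv, sub_eq_add_neg, hradd]
          ring
        rw [he]
        have h1 : (1:ℝ) ≤ (2:ℝ)^(K-(m:ℝ)) := hone _ (by linarith)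
        nlinarith [h1]
      have hpown : ((2:ℝ)^(-(m:ℝ))/δ + 1)^n ≤ ((n:ℝ)+2)^n * (2:ℝ)^((K-(m:ℝ))*(n:ℝ)) := by
        calc ((2:ℝ)^(-(m:ℝ))/δ + 1)^n ≤ (((n:ℝ)+2)*(2:ℝ)^(K-(m:ℝ)))^n := by
              apply pow_le_pow_left₀ (by positivity) hfacm
        _ = ((n:ℝ)+2)^n * (2:ℝ)^((K-(m:ℝ))*(n:ℝ)) := by
              rw [mul_pow]
              congr 1
              rw [← Real.rpow_natCast ((2:ℝ)^(K-(m:ℝ))) n,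
                ← Real.rpow_mul (by norm_num : (0:ℝ) ≤ 2)]
      have hexp : (m:ℝ)*β + (K-(m:ℝ))*(n:ℝ) ≤ P + (β-(n:ℝ)) := by
        have e1 : (m:ℝ)*(β-(n:ℝ)) ≤ (K/(β+1)+1)*(β-(n:ℝ)) :=
          mul_le_mul_of_nonneg_right hmup hβn
        have e2 : (K/(β+1)+1)*(β-(n:ℝ)) = K*(β-(n:ℝ))/(β+1) + (β-(n:ℝ)) := by
          field_simp
        rw [hPeq]
        nlinarith [e1, e2]
      calc (J m : ℝ) * (2 * ((n:ℝ)+1) * ((2:ℝ)^(-(m:ℝ))/δ + 1)^n)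
          ≤ (2:ℝ)^((m:ℝ)*β) * (2 * ((n:ℝ)+1) * (((n:ℝ)+2)^n * (2:ℝ)^((K-(m:ℝ))*(n:ℝ)))) := by
            apply mul_le_mul hJle _ (by positivity) (h2pos _).le
            exact mul_le_mul_of_nonneg_left hpown (by positivity)
      _ = 2*((n:ℝ)+1)*((n:ℝ)+2)^n * (2:ℝ)^((m:ℝ)*β + (K-(m:ℝ))*(n:ℝ)) := by
            rw [hradd]; ring
      _ ≤ 2*((n:ℝ)+1)*((n:ℝ)+2)^n * (2:ℝ)^(P + (β-(n:ℝ))) := by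
            apply mul_le_mul_of_nonneg_left (hmono2 _ _ hexp) (by positivity)
      _ = 2*((n:ℝ)+1)*((n:ℝ)+2)^n * (2:ℝ)^(β-(n:ℝ)) * (2:ℝ)^P := by
            rw [hradd]; ring
    have hNT : (∑ m ∈ Finset.Ico 1 m₀, ∑ _j ∈ Finset.Icc 1 (J m),
          (2 * ((n:ℝ)+1) * ((2:ℝ)^(-(m:ℝ))/δ + 1)^n))
        ≤ K * (2*((n:ℝ)+1)*((n:ℝ)+2)^n * (2:ℝ)^(β-(n:ℝ)) * (2:ℝ)^P) := by
      have hcard : ((Finset.Ico 1 m₀).card : ℝ) ≤ K := by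
        rw [Nat.card_Ico, hK]
        have : m₀ - 1 ≤ k := by omega
        exact_mod_cast this
      calc (∑ m ∈ Finset.Ico 1 m₀, ∑ _j ∈ Finset.Icc 1 (J m),
            (2 * ((n:ℝ)+1) * ((2:ℝ)^(-(m:ℝ))/δ + 1)^n))
          ≤ (Finset.Ico 1 m₀).card •
              (2*((n:ℝ)+1)*((n:ℝ)+2)^n * (2:ℝ)^(β-(n:ℝ)) * (2:ℝ)^P) :=
            Finset.sum_le_card_nsmul _ _ _ hterm
      _ = ((Finset.Ico 1 m₀).card : ℝ) *
              (2*((n:ℝ)+1)*((n:ℝ)+2)^n * (2:ℝ)^(β-(n:ℝ)) * (2:ℝ)^P) := nsmul_eq_mul _ _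
      _ ≤ K * (2*((n:ℝ)+1)*((n:ℝ)+2)^n * (2:ℝ)^(β-(n:ℝ)) * (2:ℝ)^P) := by
            apply mul_le_mul_of_nonneg_right hcard
            positivity
    have hring : ((2*((n:ℝ)+1)*((n:ℝ)+2)^n * (2:ℝ)^(β-(n:ℝ))) * K +
        (2*((n:ℝ)+1)*((n:ℝ)+2)^n + (2*(n:ℝ)+3)^(n+1))) * (2:ℝ)^P
        = 2*((n:ℝ)+1)*((n:ℝ)+2)^n * (2:ℝ)^P + ((2*(n:ℝ)+3)^(n+1) * (2:ℝ)^P +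
            K * (2*((n:ℝ)+1)*((n:ℝ)+2)^n * (2:ℝ)^(β-(n:ℝ)) * (2:ℝ)^P)) := by ring
    rw [hring]
    exact add_le_add hNQ (add_le_add hNB hNT)
  obtain ⟨F, hF1, hF2, hF3⟩ := covAll.mono_num harith
  exact ⟨F, hF1, hF2, hF3⟩
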